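/- In any red/blue edge-coloring of K_N with N = (n−1)(m−1)+2 (n ≥ 3, m ≥ 2) that contains no blue copy of 2K_m, there exists a red path P_{n−1} on n−1 vertices. -/

import Mathlib

open SimpleGraph Finset

/-- `G` embeds into `H` (a copy of `G` appears in `H`). -/
def graphEmbeds {V W : Type*} (G : SimpleGraph V) (H : SimpleGraph W) : Prop :=
  ∃ f : V → W, Function.Injective f ∧ ∀ u v, G.Adj u v → H.Adj (f u) (f v)

/-- `N` is large enough for the Ramsey property: every red/blue coloring of `K_N`
(the red graph `R`, blue graph `Rᶜ`) contains a red `G` or a blue `H`. -/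
def isRamsey {V W : Type*} (G : SimpleGraph V) (H : SimpleGraph W) (N : ℕ) : Prop :=
  ∀ R : SimpleGraph (Fin N), graphEmbeds G R ∨ graphEmbeds H Rᶜ

/-- The Ramsey number `R(G,H)`. -/
noncomputable def ramsey {V W : Type*} (G : SimpleGraph V) (H : SimpleGraph W) : ℕ :=
  sInf {N | isRamsey G H N}

/-- `t` disjoint copies of the complete graph `K_m`. -/
def kCliques (t m : ℕ) : SimpleGraph (Fin t × Fin m) where
  Adj x y := x.1 = y.1 ∧ x.2 ≠ y.2
  symm := ⟨fun x y h => ⟨h.1.symm, h.2.symm⟩⟩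
  loopless := ⟨fun x h => h.2 rfl⟩

/-- The chromatic number as a natural number. -/
noncomputable def chromNum {V : Type*} (G : SimpleGraph V) : ℕ := sInf {n | G.Colorable n}

/-- The chromatic surplus: the minimum size of a color class over all proper
colorings with `chromNum G` colors. -/
noncomputable def surplus {V : Type*} [Fintype V] (G : SimpleGraph V) : ℕ :=
  sInf {k | ∃ C : G.Coloring (Fin (chromNum G)), ∃ i : Fin (chromNum G),
    (Finset.univ.filter (fun v => C v = i)).card = k}

/-- `a` is a leaf of `G`: it has a unique neighbor. -/
def IsLeaf {V : Type*} (G : SimpleGraph V) (a : V) : Prop := ∃! w, G.Adj a w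

/-- Stretching: delete a leaf `b` and attach a new vertex (reusing the label `b`)
to the leaf `a`. -/
def isStretch {V : Type*} (T T' : SimpleGraph V) : Prop :=
  ∃ a b : V, a ≠ b ∧ IsLeaf T a ∧ IsLeaf T b ∧
    ∀ x y, T'.Adj x y ↔
      ((T.Adj x y ∧ x ≠ b ∧ y ≠ b) ∨ (x = b ∧ y = a) ∨ (x = a ∧ y = b))

/-- Expanding at a vertex `u` of degree `d` (`2 ≤ d ≤ n-2`) all of whose neighbors
are leaves except `z0`: delete a leaf `b` outside `N[u]` and attach a new vertex
(reusing the label `b`) to `u`. -/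
def isExpand {V : Type*} [Fintype V] (T T' : SimpleGraph V) : Prop :=
  ∃ u b z0 : V, T.Adj u z0 ∧ ¬ IsLeaf T z0 ∧
    (∀ z, T.Adj u z → z ≠ z0 → IsLeaf T z) ∧
    2 ≤ (T.neighborSet u).ncard ∧ (T.neighborSet u).ncard ≤ Fintype.card V - 2 ∧
    IsLeaf T b ∧ b ≠ u ∧ ¬ T.Adj u b ∧
    ∀ x y, T'.Adj x y ↔
      ((T.Adj x y ∧ x ≠ b ∧ y ≠ b) ∨ (x = b ∧ y = u) ∨ (x = u ∧ y = b))

/-- Disjoint union of `K_m` and `K_l`. -/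
def kUnion (m l : ℕ) : SimpleGraph (Fin m ⊕ Fin l) where
  Adj x y := x ≠ y ∧ ((x.isLeft ∧ y.isLeft) ∨ (x.isRight ∧ y.isRight))
  symm := ⟨fun x y h => ⟨h.1.symm, h.2.imp (fun p => ⟨p.2, p.1⟩) (fun p => ⟨p.2, p.1⟩)⟩⟩
  loopless := ⟨fun x h => h.1 rfl⟩

/-- Disjoint union of `k` graphs, each on `Fin n`. -/
def disjUnion {k n : ℕ} (Fs : Fin k → SimpleGraph (Fin n)) :
    SimpleGraph (Fin k × Fin n) where
  Adj x y := x.1 = y.1 ∧ (Fs x.1).Adj x.2 y.2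
  symm := by
    constructor
    rintro ⟨i, a⟩ ⟨j, b⟩ ⟨h1, h2⟩
    dsimp at h1 h2 ⊢
    subst h1
    exact ⟨rfl, h2.symm⟩
  loopless := by
    constructor
    rintro ⟨i, a⟩ ⟨h1, h2⟩
    exact (Fs i).loopless.irrefl a h2

/-- Disjoint union of graphs `Fs i` on `Fin (n i)`. -/
def sigmaUnion {r : ℕ} {n : Fin r → ℕ} (Fs : ∀ i, SimpleGraph (Fin (n i))) :
    SimpleGraph (Σ i, Fin (n i)) where
  Adj x y := ∃ (i : Fin r) (a b : Fin (n i)), x = ⟨i, a⟩ ∧ y = ⟨i, b⟩ ∧ (Fs i).Adj a b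
  symm := by
    constructor
    rintro x y ⟨i, a, b, hx, hy, h⟩
    exact ⟨i, b, a, hy, hx, h.symm⟩
  loopless := by
    constructor
    rintro x ⟨i, a, b, hx, hy, h⟩
    rw [hx] at hy
    obtain ⟨-, hab⟩ := (Sigma.mk.inj_iff).mp hy
    exact (Fs i).loopless.irrefl a (by cases eq_of_heq hab; exact h)

/-- Turn a red path (as a nodup chain list) into an embedding of `pathGraph k`. -/
lemma path_embed {N k : ℕ} {R : SimpleGraph (Fin N)} {L : List (Fin N)}
    (hnd : L.Nodup) (hlen : L.length = k) (hch : L.Chain' R.Adj) :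
    graphEmbeds (SimpleGraph.pathGraph k) R := by
  refine ⟨fun i => L.get (Fin.cast hlen.symm i), ?_, ?_⟩
  · intro a b hab
    have h := (List.nodup_iff_injective_get).mp hnd hab
    simpa [Fin.ext_iff] using congrArg Fin.val h
  · intro u v huv
    rw [SimpleGraph.pathGraph_adj] at huv
    have hc := List.isChain_iff_getElem.mp hch
    rcases huv with h | h
    · have hlt : (u : ℕ) < L.length - 1 := by
        have := v.isLt; omega
      have := hc u (by omega)
      convert this using 2 <;> simp [Fin.ext_iff, ← h] <;> omega
    · have hlt : (v : ℕ) < L.length - 1 := by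
        have := u.isLt; omega
      have := (hc v (by omega)).symm
      convert this using 2 <;> simp [Fin.ext_iff, ← h] <;> omega

/-- Two disjoint blue `m`-cliques give an embedding of `kCliques 2 m` into `Rᶜ`. -/
lemma cliques_embed {N m : ℕ} {R : SimpleGraph (Fin N)} {t t' : Finset (Fin N)}
    (ht : t.card = m) (ht' : t'.card = m) (hdisj : ∀ x ∈ t', x ∉ t)
    (hna : ∀ x ∈ t, ∀ y ∈ t, x ≠ y → ¬R.Adj x y)
    (hna' : ∀ x ∈ t', ∀ y ∈ t', x ≠ y → ¬R.Adj x y) :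
    graphEmbeds (kCliques 2 m) Rᶜ := by
  classical
  set e1 : Fin m → Fin N := fun j => (t.orderIsoOfFin ht j : Fin N) with he1
  set e2 : Fin m → Fin N := fun j => (t'.orderIsoOfFin ht' j : Fin N) with he2
  have he1inj : Function.Injective e1 := fun a b h =>
    (t.orderIsoOfFin ht).injective (Subtype.coe_injective h)
  have he2inj : Function.Injective e2 := fun a b h =>
    (t'.orderIsoOfFin ht').injective (Subtype.coe_injective h)
  have he1mem : ∀ j, e1 j ∈ t := fun j => (t.orderIsoOfFin ht j).2
  have he2mem : ∀ j, e2 j ∈ t' := fun j => (t'.orderIsoOfFin ht' j).2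
  refine ⟨fun p => if p.1 = 0 then e1 p.2 else e2 p.2, ?_, ?_⟩
  · rintro ⟨i, j⟩ ⟨i', j'⟩ h
    by_cases hi : i = 0 <;> by_cases hi' : i' = 0 <;> simp [hi, hi'] at h
    · exact Prod.ext (by rw [hi, hi']) (he1inj h)
    · exact absurd (h ▸ he1mem j) (hdisj _ (he2mem j'))
    · exact absurd (h.symm ▸ he1mem j') (hdisj _ (he2mem j))
    · refine Prod.ext ?_ (he2inj h)
      have := i.isLt; have := i'.isLt
      have : (i : ℕ) = i' := by
        rw [Fin.ext_iff] at hi hi'; simp only [Fin.val_zero] at hi hi'; omega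
      exact Fin.ext this
  · rintro ⟨i, j⟩ ⟨i', j'⟩ (⟨hii, hjj⟩ : (i, j).1 = (i', j').1 ∧ (i, j).2 ≠ (i', j').2)
    dsimp at hii hjj
    subst hii
    rw [SimpleGraph.compl_adj]
    dsimp only
    by_cases hi : i = 0
    · simp only [if_pos hi]
      exact ⟨fun h => hjj (he1inj h), hna _ (he1mem j) _ (he1mem j') (fun h => hjj (he1inj h))⟩
    · simp only [if_neg hi]
      exact ⟨fun h => hjj (he2inj h), hna' _ (he2mem j) _ (he2mem j') (fun h => hjj (he2inj h))⟩

/-- Chvátal-type bound for paths: if `|s| ≥ (k-1)m + 1` then the red graph contains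
a path on `k` vertices inside `s`, or there is a blue clique of size `m+1` in `s`. -/
lemma chvatal_aux {N : ℕ} (R : SimpleGraph (Fin N)) (k : ℕ) :
    ∀ (m : ℕ) (s : Finset (Fin N)), (k - 1) * m + 1 ≤ s.card →
    (∃ L : List (Fin N), L.Nodup ∧ L.length = k ∧ (∀ v ∈ L, v ∈ s) ∧ L.Chain' R.Adj) ∨
    (∃ t : Finset (Fin N), t ⊆ s ∧ t.card = m + 1 ∧
      ∀ x ∈ t, ∀ y ∈ t, x ≠ y → ¬ R.Adj x y) := by
  classical
  intro m
  induction m with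
  | zero =>
    intro s hs
    have hs' : 1 ≤ s.card := by simpa using hs
    obtain ⟨v, hv⟩ := Finset.card_pos.mp hs'
    refine Or.inr ⟨{v}, by simpa using hv, by simp, ?_⟩
    intro x hx y hy hxy
    simp only [Finset.mem_singleton] at hx hy
    exact absurd (hx.trans hy.symm) hxy
  | succ m ih =>
    intro s hs
    by_cases hk : ∃ L : List (Fin N), L.Nodup ∧ L.length = k ∧ (∀ v ∈ L, v ∈ s) ∧
        L.Chain' R.Adj
    · exact Or.inl hk
    -- the path property
    set P : ℕ → Prop := fun l => ∃ L : List (Fin N), L.Nodup ∧ (∀ v ∈ L, v ∈ s) ∧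
      L.Chain' R.Adj ∧ L.length = l with hP
    have hbound : ∀ l, P l → l ≤ s.card := by
      rintro l ⟨L, hnd, hmem, -, hlen⟩
      calc l = L.toFinset.card := by rw [List.toFinset_card_of_nodup hnd, hlen]
        _ ≤ s.card := Finset.card_le_card (fun v hv => hmem v (List.mem_toFinset.mp hv))
    have hP0 : P 0 := ⟨[], by simp; exact List.isChain_nil⟩
    set l0 := Nat.findGreatest P s.card with hl0
    have hspec : P l0 := Nat.findGreatest_spec (Nat.zero_le _) hP0
    have hgr : ∀ l, l0 < l → ¬ P l := by
      intro l hl hPl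
      exact Nat.findGreatest_is_greatest hl (hbound l hPl) hPl
    have hscard : 1 ≤ s.card := by omega
    have hl1 : 1 ≤ l0 := by
      obtain ⟨v, hv⟩ := Finset.card_pos.mp hscard
      exact Nat.le_findGreatest hscard ⟨[v], by simp, by simpa using hv, List.isChain_singleton _, rfl⟩
    have hkpos : 1 ≤ k := by
      rcases Nat.eq_zero_or_pos k with h | h
      · exact absurd ⟨[], List.nodup_nil, by simp [h], by simp, List.isChain_nil⟩ hk
      · exact h
    have hl0k : l0 ≤ k - 1 := by
      by_contra h
      obtain ⟨L, hnd, hmem, hch, hlen⟩ := hspec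
      refine hk ⟨L.take k, hnd.sublist (List.take_sublist _ _), ?_,
        fun v hv => hmem v (List.mem_of_mem_take hv), hch.take k⟩
      rw [List.length_take, hlen]; omega
    obtain ⟨L, hnd, hmem, hch, hlen⟩ := hspec
    obtain ⟨v, T, rfl⟩ : ∃ v T, L = v :: T := by
      cases L with
      | nil => simp at hlen; omega
      | cons v T => exact ⟨v, T, rfl⟩
    have hext : ∀ w ∈ s, w ∉ (v :: T) → ¬ R.Adj w v := by
      intro w hw hwL hadj
      refine hgr (l0 + 1) (by omega) ⟨w :: v :: T, ?_, ?_, ?_, by simp [hlen]⟩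
      · exact List.nodup_cons.mpr ⟨hwL, hnd⟩
      · intro x hx
        rcases List.mem_cons.mp hx with rfl | hx
        · exact hw
        · exact hmem x hx
      · exact List.isChain_cons.mpr ⟨fun y hy => by simp at hy; rw [← hy]; exact hadj, hch⟩
    set s' := s \ (v :: T).toFinset with hs'
    have hs'card : (k - 1) * m + 1 ≤ s'.card := by
      have h1 : s.card - (v :: T).toFinset.card ≤ s'.card := Finset.le_card_sdiff _ _
      have h2 : (v :: T).toFinset.card ≤ (v :: T).length := List.toFinset_card_le _
      have h3 : (k - 1) * (m + 1) = (k - 1) * m + (k - 1) := by ring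
      omega
    rcases ih s' hs'card with ⟨L', hnd', hlen', hmem', hch'⟩ | ⟨t, hts, htc, htna⟩
    · exact Or.inl ⟨L', hnd', hlen',
        fun x hx => (Finset.mem_sdiff.mp (hmem' x hx)).1, hch'⟩
    · have hvmem : v ∈ s := hmem v (by simp)
      have hvt : v ∉ t := by
        intro hv
        have := hts hv
        rw [Finset.mem_sdiff] at this
        exact this.2 (by simp)
      refine Or.inr ⟨insert v t, ?_, ?_, ?_⟩
      · exact Finset.insert_subset hvmem (hts.trans (Finset.sdiff_subset))
      · rw [Finset.card_insert_of_notMem hvt, htc]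
      · intro x hx y hy hxy hadj
        rcases Finset.mem_insert.mp hx with hxv | hx' <;>
          rcases Finset.mem_insert.mp hy with hyv | hy'
        · exact hxy (hxv.trans hyv.symm)
        · subst hxv
          have hys := Finset.mem_sdiff.mp (hts hy')
          exact hext y hys.1 (fun h => hys.2 (List.mem_toFinset.mpr h)) hadj.symm
        · subst hyv
          have hxs := Finset.mem_sdiff.mp (hts hx')
          exact hext x hxs.1 (fun h => hxs.2 (List.mem_toFinset.mpr h)) hadj
        · exact htna x hx' y hy' hxy hadj

/-- In any red/blue coloring of `K_N` with `N = (n-1)(m-1)+2` (`n ≥ 3`, `m ≥ 2`)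
containing no blue `2K_m`, there is a red path on `n - 1` vertices. -/
theorem stmt_18 (n m : ℕ) (hn : 3 ≤ n) (hm : 2 ≤ m)
    (R : SimpleGraph (Fin ((n - 1) * (m - 1) + 2)))
    (hblue : ¬ graphEmbeds (kCliques 2 m) Rᶜ) :
    graphEmbeds (pathGraph (n - 1)) R := by
  classical
  have e : (n - 1) * (m - 1) = (n - 2) * (m - 1) + (m - 1) := by
    have h : n - 1 = (n - 2) + 1 := by omega
    rw [h, Nat.succ_mul]
  have h1 : ((n - 1) - 1) * (m - 1) + 1 ≤
      (Finset.univ : Finset (Fin ((n - 1) * (m - 1) + 2))).card := by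
    have h' : (n - 1) - 1 = n - 2 := by omega
    rw [h', Finset.card_univ, Fintype.card_fin]
    omega
  rcases chvatal_aux R (n - 1) (m - 1) Finset.univ h1 with
    ⟨L, hnd, hlen, -, hch⟩ | ⟨t, -, htc, htna⟩
  · exact path_embed hnd hlen hch
  have htm : t.card = m := by rw [htc]; omega
  have h2 : ((n - 1) - 1) * (m - 1) + 1 ≤
      (Finset.univ \ t : Finset (Fin ((n - 1) * (m - 1) + 2))).card := by
    have h' : (n - 1) - 1 = n - 2 := by omega
    rw [Finset.card_sdiff_of_subset (Finset.subset_univ t), Finset.card_univ, Fintype.card_fin, htm, h']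
    omega
  rcases chvatal_aux R (n - 1) (m - 1) (Finset.univ \ t) h2 with
    ⟨L, hnd, hlen, -, hch⟩ | ⟨t', hts', htc', htna'⟩
  · exact path_embed hnd hlen hch
  have htm' : t'.card = m := by rw [htc']; omega
  exact absurd (cliques_embed htm htm'
    (fun x hx => (Finset.mem_sdiff.mp (hts' hx)).2) htna htna') hblue
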